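/- Let L : M_n(ℂ) → M_n(ℂ) be linear with L(1) = 0, such that each T_t = e^{−tL} is a 2-positive, unital, trace-preserving map that is self-adjoint with respect to the trace inner product (tr(T_t(f)* g) = tr(f* T_t(g))). If f ∈ M_n(ℂ) satisfies T_t(f* f) = T_t(f)* T_t(f) for all t ≥ 0, then T_t f = f for all t ≥ 0. -/

import Mathlib

open Matrix

attribute [local instance] Matrix.frobeniusNormedAddCommGroup Matrix.frobeniusNormedSpace

set_option synthInstance.maxHeartbeats 1000000
set_option maxHeartbeats 1000000

/-- The matrix algebra `Mₙ(ℂ)` with the Frobenius norm. -/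
noncomputable abbrev Msp18 (n : ℕ) := Matrix (Fin n) (Fin n) ℂ

/-- The semigroup `T_t = e^{−tL}` generated by `−L`. -/
noncomputable def Tsem18 {n : ℕ} (L : Msp18 n →L[ℂ] Msp18 n) (t : ℝ) : Msp18 n →L[ℂ] Msp18 n :=
  @NormedSpace.exp _ _ _ (by
    let R : NormedRing (Msp18 n →L[ℂ] Msp18 n) := ContinuousLinearMap.toNormedRing
    exact @NonUnitalSeminormedRing.toIsTopologicalRing _ R.toNonUnitalNormedRing.toNonUnitalSeminormedRing)
    ((-(t : ℂ)) • L)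

lemma cs_aux18 {X : Type*} [NormedRing X] [NormedAlgebra ℂ X] [FiniteDimensional ℂ X] :
    CompleteSpace X := FiniteDimensional.complete ℂ X

/-- Semigroup property of `Tsem18`. -/
lemma tsem_add18 {n : ℕ} (L : Msp18 n →L[ℂ] Msp18 n) (s t : ℝ) (x : Msp18 n) :
    Tsem18 L t (Tsem18 L s x) = Tsem18 L (t + s) x := by
  have hc : Commute ((-(t:ℂ)) • L) ((-(s:ℂ)) • L) := by
    unfold Commute SemiconjBy
    ext x
    simp [ContinuousLinearMap.mul_apply, _root_.map_smul, smul_smul]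
    ring
  have h : Tsem18 L t * Tsem18 L s = Tsem18 L (t + s) := by
    unfold Tsem18
    have hts : ((-(↑(t+s)) : ℂ)) = (-(t:ℂ)) + (-(s:ℂ)) := by push_cast; ring
    have hL : (-(↑(t+s)) : ℂ) • L = (-(t:ℂ)) • L + (-(s:ℂ)) • L := by
      rw [hts]; exact add_smul _ _ L
    have hfd : FiniteDimensional ℂ (Msp18 n →L[ℂ] Msp18 n) := inferInstance
    letI : NormedRing (Msp18 n →L[ℂ] Msp18 n) := ContinuousLinearMap.toNormedRing
    letI : NormedAlgebra ℂ (Msp18 n →L[ℂ] Msp18 n) := ContinuousLinearMap.toNormedAlgebra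
    letI : NormedAlgebra ℚ (Msp18 n →L[ℂ] Msp18 n) := NormedAlgebra.restrictScalars ℚ ℂ _
    have e := (@NormedSpace.exp_add_of_commute (Msp18 n →L[ℂ] Msp18 n) _ _
      (@cs_aux18 _ _ _ (by exact hfd)) _ _ hc).symm
    exact e.trans (congrArg _ hL.symm)
  calc Tsem18 L t (Tsem18 L s x) = (Tsem18 L t * Tsem18 L s) x := rfl
    _ = Tsem18 L (t + s) x := by rw [h]

/-- If `tr(g* g) = 0` then `g = 0`. -/
lemma trace_zero_eq18 {n : ℕ} (g : Msp18 n) (h : (star g * g).trace = 0) : g = 0 := by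
  have hz : ∀ i j, g i j = 0 := by
    have hsum : (∑ i, ∑ j, (Complex.normSq (g j i) : ℂ)) = 0 := by
      rw [← h]
      simp [Matrix.trace, Matrix.diag, Matrix.mul_apply, Matrix.star_apply,
        ← Complex.normSq_eq_conj_mul_self]
    have hsum' : (∑ i, ∑ j, Complex.normSq (g j i)) = 0 := by exact_mod_cast hsum
    intro i j
    have h1 := (Finset.sum_eq_zero_iff_of_nonneg
      (fun i _ => Finset.sum_nonneg fun j _ => Complex.normSq_nonneg _)).mp hsum' j (Finset.mem_univ _)
    have h2 := (Finset.sum_eq_zero_iff_of_nonneg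
      (fun j _ => Complex.normSq_nonneg _)).mp h1 i (Finset.mem_univ _)
    exact Complex.normSq_eq_zero.mp h2
  ext i j; exact hz i j

/-- let `L : Mₙ(ℂ) → Mₙ(ℂ)` be linear with `L(1) = 0` such that each
`T_t = e^{−tL}` (for `t ≥ 0`) is unital, 2-positive, trace preserving and self-adjoint with
respect to the trace. If `T_t(f* f) = T_t(f)* T_t(f)` for all `t ≥ 0`, then `T_t f = f` for
all `t ≥ 0`. -/
theorem stmt18 {n : ℕ} (L : Msp18 n →L[ℂ] Msp18 n) (hL1 : L 1 = 0)
    (hunital : ∀ t : ℝ, 0 ≤ t → Tsem18 L t 1 = 1)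
    (h2pos : ∀ t : ℝ, 0 ≤ t → ∀ M : Matrix (Fin 2) (Fin 2) (Msp18 n),
      (∃ B : Matrix (Fin 2) (Fin 2) (Msp18 n), M = Bᴴ * B) →
      ∃ B : Matrix (Fin 2) (Fin 2) (Msp18 n), M.map (Tsem18 L t) = Bᴴ * B)
    (htrace : ∀ t : ℝ, 0 ≤ t → ∀ x : Msp18 n, (Tsem18 L t x).trace = x.trace)
    (hsa : ∀ t : ℝ, 0 ≤ t → ∀ x y : Msp18 n,
      (star (Tsem18 L t x) * y).trace = (star x * Tsem18 L t y).trace)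
    (f : Msp18 n)
    (hf : ∀ t : ℝ, 0 ≤ t → Tsem18 L t (star f * f) = star (Tsem18 L t f) * Tsem18 L t f) :
    ∀ t : ℝ, 0 ≤ t → Tsem18 L t f = f := by
  -- key identity : tr(f* T_s f) = tr(f* f) for all s ≥ 0
  have key : ∀ s : ℝ, 0 ≤ s → (star f * Tsem18 L s f).trace = (star f * f).trace := by
    intro s hs
    have ht : (0:ℝ) ≤ s / 2 := by linarith
    have h1 : Tsem18 L s f = Tsem18 L (s/2) (Tsem18 L (s/2) f) := by
      rw [tsem_add18]; norm_num
    calc (star f * Tsem18 L s f).trace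
        = (star f * Tsem18 L (s/2) (Tsem18 L (s/2) f)).trace := by rw [h1]
      _ = (star (Tsem18 L (s/2) f) * Tsem18 L (s/2) f).trace := (hsa (s/2) ht f _).symm
      _ = (Tsem18 L (s/2) (star f * f)).trace := by rw [hf (s/2) ht]
      _ = (star f * f).trace := htrace (s/2) ht _
  intro t ht
  set g := f - Tsem18 L t f with hg
  have hTf : (star (Tsem18 L t f) * f).trace = (star f * f).trace := by
    rw [hsa t ht f f]; exact key t ht
  have hTT : (star (Tsem18 L t f) * Tsem18 L t f).trace = (star f * f).trace := by
    rw [hsa t ht f _, tsem_add18]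
    exact key (t + t) (by linarith)
  have hzero : (star g * g).trace = 0 := by
    have : star g * g = star f * f - star f * Tsem18 L t f
        - (star (Tsem18 L t f) * f - star (Tsem18 L t f) * Tsem18 L t f) := by
      rw [hg]
      simp only [star_sub, sub_mul, mul_sub]
      abel
    rw [this]
    simp only [Matrix.trace_sub]
    rw [key t ht, hTf, hTT]
    ring
  have := trace_zero_eq18 g hzero
  rw [hg, sub_eq_zero] at this
  exact this.symm
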